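/- For every integer C ≥ 2, every C-class confusion matrix M satisfies (C−2)/(2(C−1)) ≤ ρ_o(M) ≤ 1; moreover both bounds are attained: any confusion matrix with all diagonal entries equal to 0 attains the lower bound (C−2)/(2(C−1)), and any diagonal confusion matrix (m_ij = 0 for i≠j) attains the upper bound 1. -/

import Mathlib

open Finset

/-- The AUROC-OVO index `ρ_o` of a `C`-class confusion matrix `m`
(whose `i`-th row sum plays the role of `n_i`). -/
noncomputable def rhoOVO (C : ℕ) (m : Fin C → Fin C → ℕ) : ℝ :=
  (1 / (2 * (C : ℝ))) *
    ∑ i, (1 + (m i i : ℝ) / (∑ j, (m i j : ℝ))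
      - ∑ j ∈ Finset.univ.erase i, (m j i : ℝ) / (((C : ℝ) - 1) * ∑ l, (m j l : ℝ)))

lemma rhoOVO_eq (C : ℕ) (hC : 2 ≤ C) (m : Fin C → Fin C → ℕ)
    (hn : ∀ i, 0 < ∑ j, m i j) :
    rhoOVO C m = (((C : ℝ) - 2) + ∑ i, (m i i : ℝ) / (∑ j, (m i j : ℝ)))
      / (2 * ((C : ℝ) - 1)) := by
  have hCR : (2 : ℝ) ≤ (C : ℝ) := by exact_mod_cast hC
  have hC0 : (C : ℝ) ≠ 0 := by linarith
  have hC1 : (C : ℝ) - 1 ≠ 0 := by linarith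
  have hnR : ∀ i, (0 : ℝ) < ∑ j, (m i j : ℝ) := by
    intro i
    have := hn i
    have : (0 : ℝ) < ((∑ j, m i j : ℕ) : ℝ) := by exact_mod_cast this
    simpa [Nat.cast_sum] using this
  have hswap : ∑ i, ∑ j ∈ Finset.univ.erase i,
        (m j i : ℝ) / (((C : ℝ) - 1) * ∑ l, (m j l : ℝ))
      = ∑ j, ∑ i ∈ Finset.univ.erase j,
        (m j i : ℝ) / (((C : ℝ) - 1) * ∑ l, (m j l : ℝ)) := by
    apply Finset.sum_comm'
    intro x y
    simp [Finset.mem_erase, ne_comm, and_comm]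
  unfold rhoOVO
  rw [Finset.sum_sub_distrib, hswap, ← Finset.sum_sub_distrib]
  have hinner : ∀ j, ∑ i ∈ Finset.univ.erase j,
        (m j i : ℝ) / (((C : ℝ) - 1) * ∑ l, (m j l : ℝ))
      = ((∑ l, (m j l : ℝ)) - (m j j : ℝ)) / (((C : ℝ) - 1) * ∑ l, (m j l : ℝ)) := by
    intro j
    rw [← Finset.sum_div]
    congr 1
    rw [Finset.sum_erase_eq_sub (Finset.mem_univ j)]
  have hterm : ∀ j, (1 + (m j j : ℝ) / (∑ l, (m j l : ℝ))
        - ((∑ l, (m j l : ℝ)) - (m j j : ℝ)) / (((C : ℝ) - 1) * ∑ l, (m j l : ℝ)))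
      = ((C : ℝ) - 2) / ((C : ℝ) - 1)
        + ((C : ℝ) / ((C : ℝ) - 1)) * ((m j j : ℝ) / (∑ l, (m j l : ℝ))) := by
    intro j
    have hj := (hnR j).ne'
    field_simp
    ring
  have hsum : ∑ x : Fin C, (1 + (m x x : ℝ) / (∑ j, (m x j : ℝ))
        - ∑ i ∈ Finset.univ.erase x, (m x i : ℝ) / (((C : ℝ) - 1) * ∑ l, (m x l : ℝ)))
      = ∑ x : Fin C, (((C : ℝ) - 2) / ((C : ℝ) - 1)
        + ((C : ℝ) / ((C : ℝ) - 1)) * ((m x x : ℝ) / (∑ l, (m x l : ℝ)))) :=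
    Finset.sum_congr rfl fun x _ => by rw [hinner x]; exact hterm x
  rw [hsum, Finset.sum_add_distrib, Finset.sum_const, ← Finset.mul_sum]
  simp only [Finset.card_univ, Fintype.card_fin, nsmul_eq_mul]
  field_simp

theorem rhoOVO_bounds (C : ℕ) (hC : 2 ≤ C) :
    (∀ m : Fin C → Fin C → ℕ, (∀ i, 0 < ∑ j, m i j) →
      ((C : ℝ) - 2) / (2 * ((C : ℝ) - 1)) ≤ rhoOVO C m ∧ rhoOVO C m ≤ 1) ∧
    (∀ m : Fin C → Fin C → ℕ, (∀ i, 0 < ∑ j, m i j) → (∀ i, m i i = 0) →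
      rhoOVO C m = ((C : ℝ) - 2) / (2 * ((C : ℝ) - 1))) ∧
    (∀ m : Fin C → Fin C → ℕ, (∀ i, 0 < ∑ j, m i j) →
      (∀ i j, i ≠ j → m i j = 0) → rhoOVO C m = 1) := by
  have hCR : (2 : ℝ) ≤ (C : ℝ) := by exact_mod_cast hC
  have hden : (0 : ℝ) < 2 * ((C : ℝ) - 1) := by linarith
  refine ⟨?_, ?_, ?_⟩
  · intro m hn
    rw [rhoOVO_eq C hC m hn]
    have hnR : ∀ i, (0 : ℝ) < ∑ j, (m i j : ℝ) := by
      intro i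
      have : (0 : ℝ) < ((∑ j, m i j : ℕ) : ℝ) := by exact_mod_cast hn i
      simpa [Nat.cast_sum] using this
    have hS0 : (0 : ℝ) ≤ ∑ i, (m i i : ℝ) / (∑ j, (m i j : ℝ)) :=
      Finset.sum_nonneg fun i _ => div_nonneg (by positivity) (hnR i).le
    have hS1 : ∑ i, (m i i : ℝ) / (∑ j, (m i j : ℝ)) ≤ (C : ℝ) := by
      calc ∑ i, (m i i : ℝ) / (∑ j, (m i j : ℝ)) ≤ ∑ _i : Fin C, (1 : ℝ) := by
            refine Finset.sum_le_sum fun i _ => ?_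
            rw [div_le_one (hnR i)]
            exact Finset.single_le_sum (f := fun j => (m i j : ℝ))
              (fun j _ => by positivity) (Finset.mem_univ i)
        _ = (C : ℝ) := by simp
    constructor
    · gcongr
      linarith
    · rw [div_le_one hden]
      linarith
  · intro m hn hd
    rw [rhoOVO_eq C hC m hn]
    simp [hd]
  · intro m hn hd
    rw [rhoOVO_eq C hC m hn]
    have : ∀ i : Fin C, (m i i : ℝ) / (∑ j, (m i j : ℝ)) = 1 := by
      intro i
      have hrow : ∑ j, (m i j : ℝ) = (m i i : ℝ) := by
        rw [← Finset.sum_erase_add _ _ (Finset.mem_univ i)]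
        have : ∑ j ∈ Finset.univ.erase i, (m i j : ℝ) = 0 := by
          refine Finset.sum_eq_zero fun j hj => ?_
          rw [hd i j (Ne.symm (Finset.mem_erase.1 hj).1)]
          simp
        rw [this, zero_add]
      have hpos : 0 < m i i := by
        by_contra h
        push_neg at h
        interval_cases h' : m i i
        have := hn i
        have hcast : (0:ℝ) < ∑ j, (m i j : ℝ) := by
          have : (0 : ℝ) < ((∑ j, m i j : ℕ) : ℝ) := by exact_mod_cast hn i
          simpa [Nat.cast_sum] using this
        rw [hrow] at hcast
        simp [h'] at hcast
      rw [hrow, div_self (by exact_mod_cast hpos.ne')]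
    rw [Finset.sum_congr rfl fun i _ => this i]
    rw [Finset.sum_const, Finset.card_univ, Fintype.card_fin, nsmul_eq_mul, mul_one,
      div_eq_one_iff_eq hden.ne']
    ring
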